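/- For nonnegative integers r, s, m, t with m ≥ r and t ≥ m: ∑_{j=0}^{min(r,s)} q^{(j-s)(j-r)} · C_q(r, j) · C_q(m−r, s−j) · C_q(t+j, m) = C_q(t, m−s) · C_q(t−m+s+r, s). -/
import Mathlib


open Finset

/-- The q-Pochhammer symbol `(a;q)_n = ∏_{j=0}^{n-1} (1 - a q^j)`. -/
noncomputable def qPoch (q a : RatFunc ℚ) (n : ℕ) : RatFunc ℚ :=
  ∏ j ∈ Finset.range n, (1 - a * q ^ j)

/-- The Gaussian (q-binomial) coefficient `C_q(m, k)`, defined as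
`(q;q)_m / ((q;q)_k (q;q)_{m-k})` for `0 ≤ k ≤ m`, and `0` otherwise. -/
noncomputable def qBinom (q : RatFunc ℚ) (m k : ℤ) : RatFunc ℚ :=
  if 0 ≤ k ∧ k ≤ m then
    qPoch q q m.toNat / (qPoch q q k.toNat * qPoch q q (m - k).toNat)
  else 0

namespace QT
noncomputable abbrev q : RatFunc ℚ := RatFunc.X
noncomputable def P (n : ℕ) : RatFunc ℚ := qPoch q q n
noncomputable def B (n k : ℤ) : RatFunc ℚ := qBinom q n k

lemma q_ne : (q : RatFunc ℚ) ≠ 0 := RatFunc.X_ne_zero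
lemma P_succ (n : ℕ) : P (n+1) = P n * (1 - q ^ (n+1)) := by
  simp only [P, qPoch, Finset.prod_range_succ]
  ring
lemma P_zero : P 0 = 1 := by simp [P, qPoch]
lemma P_ne (n : ℕ) : P n ≠ 0 := by
  induction n with
  | zero => simp [P_zero]
  | succ n ih =>
    rw [P_succ]
    refine mul_ne_zero ih ?_
    intro h
    have h1 : (q : RatFunc ℚ) ^ (n+1) = 1 := by linear_combination -h
    have : algebraMap (Polynomial ℚ) (RatFunc ℚ) (Polynomial.X ^ (n+1)) =
        algebraMap (Polynomial ℚ) (RatFunc ℚ) 1 := by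
      simpa [map_pow, RatFunc.algebraMap_X] using h1
    have h2 := RatFunc.algebraMap_injective ℚ this
    have := congrArg (Polynomial.eval 0) h2
    simp at this
lemma one_sub_ne (n : ℕ) : (1 : RatFunc ℚ) - q ^ (n+1) ≠ 0 := by
  have := P_ne (n+1)
  rw [P_succ] at this
  exact fun h => this (by rw [h, mul_zero])
lemma B_def (n k : ℕ) (h : k ≤ n) : B n k = P n / (P k * P (n - k)) := by
  have : ((n : ℤ) - k).toNat = n - k := by omega
  simp [B, qBinom, h, this, P]
lemma B_of_not (n k : ℤ) (h : ¬ (0 ≤ k ∧ k ≤ n)) : B n k = 0 := by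
  simp [B, qBinom, h]
lemma B_zero (n : ℕ) : B n 0 = 1 := by
  have := B_def n 0 (Nat.zero_le n)
  simp only [Nat.cast_zero] at this
  rw [this]
  simp [P_zero, div_self (P_ne n)]
lemma B_self (n : ℕ) : B n n = 1 := by
  rw [B_def n n le_rfl]
  simp [P_zero, div_self (P_ne n)]

lemma B_symm (n : ℕ) (k : ℤ) : B n k = B n ((n : ℤ) - k) := by
  by_cases h : 0 ≤ k ∧ k ≤ (n : ℤ)
  · obtain ⟨a, rfl⟩ : ∃ a : ℕ, k = a := ⟨k.toNat, by omega⟩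
    have ha : a ≤ n := by exact_mod_cast h.2
    have h1 : ((n : ℤ) - a) = ((n - a : ℕ) : ℤ) := by push_cast; omega
    rw [h1, B_def n a ha, B_def n (n - a) (Nat.sub_le n a)]
    have : n - (n - a) = a := by omega
    rw [this, mul_comm]
  · rw [B_of_not _ _ h, B_of_not]
    omega

lemma pascal1 (n : ℕ) (k : ℤ) :
    B ((n : ℤ) + 1) k = B n (k - 1) + q ^ k * B n k := by
  rcases lt_or_ge k 0 with hk | hk
  · rw [B_of_not _ _ (by omega), B_of_not _ _ (by omega), B_of_not _ _ (by omega)]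
    ring
  obtain ⟨a, rfl⟩ : ∃ a : ℕ, k = a := ⟨k.toNat, by omega⟩
  rcases Nat.lt_or_ge n.succ a with ha | ha
  · -- a > n + 1 : all zero
    rw [B_of_not _ _ (by push_cast; omega), B_of_not _ _ (by push_cast; omega),
      B_of_not _ _ (by push_cast; omega)]
    ring
  rcases Nat.eq_zero_or_pos a with rfl | hpos
  · simp only [Nat.cast_zero, zpow_zero, one_mul, zero_sub]
    rw [B_of_not (n : ℤ) (-1 : ℤ) (by omega)]
    rw [show ((n : ℤ) + 1) = ((n + 1 : ℕ) : ℤ) by push_cast; ring]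
    rw [B_zero (n+1), B_zero n]
    ring
  rcases Nat.eq_or_lt_of_le ha with rfl | ha2
  · -- a = n+1
    rw [show ((n : ℤ) + 1) = ((n + 1 : ℕ) : ℤ) by push_cast; ring,
      show (n.succ : ℤ) = ((n+1:ℕ) : ℤ) by push_cast; ring]
    rw [B_self (n+1), B_of_not (n : ℤ) ((n+1:ℕ):ℤ) (by push_cast; omega)]
    rw [show ((n+1 : ℕ) : ℤ) - 1 = ((n:ℕ) : ℤ) by push_cast; ring, B_self n]
    ring
  -- now 1 ≤ a ≤ n
  obtain ⟨c, rfl⟩ : ∃ c : ℕ, a = c + 1 := ⟨a - 1, by omega⟩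
  obtain ⟨b, rfl⟩ : ∃ b : ℕ, n = c + 1 + b := ⟨n - c - 1, by omega⟩
  have e1 : ((c + 1 + b : ℕ) : ℤ) + 1 = ((c + 1 + b + 1 : ℕ) : ℤ) := by push_cast; ring
  have e2 : ((c + 1 : ℕ) : ℤ) - 1 = ((c : ℕ) : ℤ) := by push_cast; ring
  rw [e1, e2, B_def (c+1+b+1) (c+1) (by omega), B_def (c+1+b) c (by omega),
    B_def (c+1+b) (c+1) (by omega)]
  have f1 : c + 1 + b + 1 - (c + 1) = b + 1 := by omega
  have f2 : c + 1 + b - c = b + 1 := by omega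
  have f3 : c + 1 + b - (c + 1) = b := by omega
  rw [f1, f2, f3]
  rw [show (c + 1 + b + 1) = (c + 1 + b) + 1 from rfl, P_succ (c+1+b),
    show c + 1 = c + 1 from rfl, P_succ c, P_succ b]
  rw [show ((c+1:ℕ) : ℤ) = ((c:ℤ)+1) by push_cast; ring] at *
  rw [show (q : RatFunc ℚ) ^ ((c:ℤ)+1) = q ^ (c+1) by
    rw [← zpow_natCast (q : RatFunc ℚ) (c+1)]; norm_cast]
  have hc : (1 : RatFunc ℚ) - q ^ (c+1) ≠ 0 := one_sub_ne c
  have hb : (1 : RatFunc ℚ) - q ^ (b+1) ≠ 0 := one_sub_ne b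
  field_simp [P_ne c, P_ne b]
  ring

lemma trinomial (n k l : ℤ) :
    B n k * B k l = B n l * B (n - l) (k - l) := by
  by_cases hl : 0 ≤ l
  · by_cases hlk : l ≤ k
    · by_cases hkn : k ≤ n
      · obtain ⟨c, rfl⟩ : ∃ c : ℕ, l = c := ⟨l.toNat, by omega⟩
        obtain ⟨d, rfl⟩ : ∃ d : ℕ, k = c + (d:ℤ) := ⟨(k - c).toNat, by omega⟩
        obtain ⟨e, rfl⟩ : ∃ e : ℕ, n = c + d + (e:ℤ) := ⟨(n - c - d).toNat, by omega⟩
        rw [show (c:ℤ) + d + e = ((c + d + e : ℕ) : ℤ) by push_cast; ring,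
          show (c:ℤ) + d = ((c + d : ℕ) : ℤ) by push_cast; ring]
        rw [B_def (c+d+e) (c+d) (by omega), B_def (c+d) c (by omega),
          B_def (c+d+e) c (by omega)]
        rw [show ((c+d+e:ℕ):ℤ) - c = ((d + e : ℕ):ℤ) by push_cast; ring,
          show ((c+d:ℕ):ℤ) - c = ((d:ℕ):ℤ) by push_cast; ring]
        rw [B_def (d+e) d (by omega)]
        rw [show c+d+e-(c+d) = e by omega, show c+d-c = d by omega,
          show c+d+e-c = d+e by omega, show d+e-d = e by omega]
        rw [div_mul_div_comm, div_mul_div_comm,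
          div_eq_div_iff
            (mul_ne_zero (mul_ne_zero (P_ne (c+d)) (P_ne e)) (mul_ne_zero (P_ne c) (P_ne d)))
            (mul_ne_zero (mul_ne_zero (P_ne c) (P_ne (d+e))) (mul_ne_zero (P_ne d) (P_ne e)))]
        ring
      · rw [B_of_not n k (by omega), B_of_not (n-l) (k-l) (by omega)]
        ring
    · rw [B_of_not k l (by omega), B_of_not (n-l) (k-l) (by omega)]
      ring
  · rw [B_of_not k l (by omega), B_of_not n l (by omega)]
    ring

lemma pascal2 (n : ℕ) (k : ℤ) :
    B ((n : ℤ) + 1) k = q ^ ((n:ℤ) + 1 - k) * B n (k - 1) + B n k := by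
  rw [show B ((n:ℤ)+1) k = B (((n+1:ℕ)):ℤ) k by norm_cast,
      B_symm (n+1) k, show (((n+1:ℕ):ℤ) - k) = ((n:ℤ)+1-k) by push_cast; ring,
      show B (((n+1:ℕ)):ℤ) ((n:ℤ)+1-k) = B ((n:ℤ)+1) ((n:ℤ)+1-k) by norm_cast,
      pascal1 n ((n:ℤ)+1-k)]
  rw [show ((n:ℤ)+1-k-1) = (n:ℤ) - k by ring, ← B_symm n k]
  rw [show ((n:ℤ)+1-k) = (n:ℤ) - (k-1) by ring, ← B_symm n (k-1)]
  ring

lemma vandermonde1 (a b : ℕ) (k : ℤ) :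
    B ((a : ℤ) + b) k
      = ∑ j ∈ Finset.range (a+1), q ^ (((a:ℤ)-j)*(k-j)) * B a j * B b (k-j) := by
  induction a generalizing k with
  | zero =>
    rw [Finset.sum_range_one]
    have h0 := B_zero 0
    norm_num at h0 ⊢
    rw [h0]
    ring
  | succ a ih =>
    have expand : ∑ j ∈ Finset.range (a+1+1),
          q ^ ((((a+1:ℕ):ℤ)-j)*(k-j)) * B ((a+1:ℕ):ℤ) j * B b (k-j)
        = (∑ j ∈ Finset.range (a+1+1),
            q ^ ((((a+1:ℕ):ℤ)-j)*(k-j)) * B a ((j:ℤ)-1) * B b (k-j))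
          + ∑ j ∈ Finset.range (a+1+1),
            q ^ ((((a+1:ℕ):ℤ)-j)*(k-j)) * (q ^ (j:ℤ) * B a j) * B b (k-j) := by
      rw [← Finset.sum_add_distrib]
      refine Finset.sum_congr rfl fun j _ => ?_
      rw [show B ((a+1:ℕ):ℤ) (j:ℤ) = B ((a:ℤ)+1) (j:ℤ) by norm_cast, pascal1 a j]
      ring
    have first : (∑ j ∈ Finset.range (a+1+1),
          q ^ ((((a+1:ℕ):ℤ)-j)*(k-j)) * B a ((j:ℤ)-1) * B b (k-j))
        = ∑ j ∈ Finset.range (a+1), q ^ (((a:ℤ)-j)*((k-1)-j)) * B a j * B b ((k-1)-j) := by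
      rw [Finset.sum_range_succ' _ (a+1)]
      rw [show ((0:ℕ):ℤ) - 1 = (-1 : ℤ) by norm_num, B_of_not a (-1) (by omega)]
      simp only [mul_zero, zero_mul, add_zero]
      refine Finset.sum_congr rfl fun i hi => ?_
      rw [show ((((a+1:ℕ)):ℤ)-((i+1:ℕ):ℤ))*(k-((i+1:ℕ):ℤ)) = ((a:ℤ)-i)*((k-1)-i) by push_cast; ring,
        show ((i+1:ℕ):ℤ) - 1 = (i:ℤ) by push_cast; ring,
        show k - ((i+1:ℕ):ℤ) = k - 1 - i by push_cast; ring]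
    have second : (∑ j ∈ Finset.range (a+1+1),
          q ^ ((((a+1:ℕ):ℤ)-j)*(k-j)) * (q ^ (j:ℤ) * B a j) * B b (k-j))
        = q ^ k * ∑ j ∈ Finset.range (a+1), q ^ (((a:ℤ)-j)*(k-j)) * B a j * B b (k-j) := by
      rw [Finset.sum_range_succ]
      rw [B_of_not a ((a+1:ℕ):ℤ) (by push_cast; omega)]
      simp only [mul_zero, zero_mul, add_zero]
      rw [Finset.mul_sum]
      refine Finset.sum_congr rfl fun i hi => ?_
      have hq : q ^ ((((a+1:ℕ):ℤ)-(i:ℤ))*(k-(i:ℤ))) * q ^ (i:ℤ)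
          = q ^ (((a:ℤ)-i)*(k-i)) * q ^ k := by
        rw [← zpow_add₀ q_ne, ← zpow_add₀ q_ne]
        congr 1
        push_cast
        ring
      calc q ^ ((((a+1:ℕ):ℤ)-(i:ℤ))*(k-(i:ℤ))) * (q ^ (i:ℤ) * B (a:ℤ) (i:ℤ)) * B (b:ℤ) (k-(i:ℤ))
          = (q ^ ((((a+1:ℕ):ℤ)-(i:ℤ))*(k-(i:ℤ))) * q ^ (i:ℤ)) * B (a:ℤ) (i:ℤ) * B (b:ℤ) (k-(i:ℤ)) := by ring
        _ = q ^ k * (q ^ (((a:ℤ)-i)*(k-i)) * B (a:ℤ) (i:ℤ) * B (b:ℤ) (k-(i:ℤ))) := by rw [hq]; ring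
    rw [show ((a+1:ℕ):ℤ) + (b:ℤ) = ((a+b:ℕ):ℤ) + 1 by push_cast; ring] at *
    rw [pascal1 (a+b) k]
    rw [show ((a+b:ℕ):ℤ) = (a:ℤ) + b by push_cast; ring, ih (k-1), ih k]
    rw [expand, first, second]

lemma vandermonde2 (a b : ℕ) (k : ℤ) :
    B ((a : ℤ) + b) k
      = ∑ j ∈ Finset.range (a+1), q ^ ((j:ℤ)*((b:ℤ)-k+j)) * B a j * B b (k-j) := by
  induction a generalizing k with
  | zero =>
    rw [Finset.sum_range_one]
    have h0 := B_zero 0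
    norm_num at h0 ⊢
    rw [h0]
    ring
  | succ a ih =>
    have expand : ∑ j ∈ Finset.range (a+1+1),
          q ^ ((j:ℤ)*((b:ℤ)-k+j)) * B ((a+1:ℕ):ℤ) j * B b (k-j)
        = (∑ j ∈ Finset.range (a+1+1),
            q ^ ((j:ℤ)*((b:ℤ)-k+j)) * (q ^ ((a:ℤ)+1-j) * B a ((j:ℤ)-1)) * B b (k-j))
          + ∑ j ∈ Finset.range (a+1+1),
            q ^ ((j:ℤ)*((b:ℤ)-k+j)) * B a j * B b (k-j) := by
      rw [← Finset.sum_add_distrib]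
      refine Finset.sum_congr rfl fun j _ => ?_
      rw [show B ((a+1:ℕ):ℤ) (j:ℤ) = B ((a:ℤ)+1) (j:ℤ) by norm_cast, pascal2 a j]
      ring
    have first : (∑ j ∈ Finset.range (a+1+1),
          q ^ ((j:ℤ)*((b:ℤ)-k+j)) * (q ^ ((a:ℤ)+1-j) * B a ((j:ℤ)-1)) * B b (k-j))
        = q ^ (((a+b:ℕ):ℤ)+1-k) *
            ∑ j ∈ Finset.range (a+1), q ^ ((j:ℤ)*((b:ℤ)-(k-1)+j)) * B a j * B b ((k-1)-j) := by
      rw [Finset.sum_range_succ' _ (a+1)]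
      rw [show ((0:ℕ):ℤ) - 1 = (-1 : ℤ) by norm_num, B_of_not a (-1) (by omega)]
      simp only [mul_zero, zero_mul, add_zero]
      rw [Finset.mul_sum]
      refine Finset.sum_congr rfl fun i hi => ?_
      have hq : q ^ (((i+1:ℕ):ℤ)*((b:ℤ)-k+((i+1:ℕ):ℤ))) * q ^ ((a:ℤ)+1-((i+1:ℕ):ℤ))
          = q ^ (((a+b:ℕ):ℤ)+1-k) * q ^ ((i:ℤ)*((b:ℤ)-(k-1)+i)) := by
        rw [← zpow_add₀ q_ne, ← zpow_add₀ q_ne]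
        congr 1
        push_cast
        ring
      calc q ^ (((i+1:ℕ):ℤ)*((b:ℤ)-k+((i+1:ℕ):ℤ))) *
              (q ^ ((a:ℤ)+1-((i+1:ℕ):ℤ)) * B (a:ℤ) (((i+1:ℕ):ℤ)-1)) * B (b:ℤ) (k-((i+1:ℕ):ℤ))
          = (q ^ (((i+1:ℕ):ℤ)*((b:ℤ)-k+((i+1:ℕ):ℤ))) * q ^ ((a:ℤ)+1-((i+1:ℕ):ℤ))) *
              B (a:ℤ) (((i+1:ℕ):ℤ)-1) * B (b:ℤ) (k-((i+1:ℕ):ℤ)) := by ring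
        _ = q ^ (((a+b:ℕ):ℤ)+1-k) *
              (q ^ ((i:ℤ)*((b:ℤ)-(k-1)+i)) * B (a:ℤ) (i:ℤ) * B (b:ℤ) ((k-1)-(i:ℤ))) := by
            rw [hq, show ((i+1:ℕ):ℤ) - 1 = (i:ℤ) by push_cast; ring,
              show k - ((i+1:ℕ):ℤ) = k - 1 - (i:ℤ) by push_cast; ring]
            ring
    have second : (∑ j ∈ Finset.range (a+1+1),
          q ^ ((j:ℤ)*((b:ℤ)-k+j)) * B a j * B b (k-j))
        = ∑ j ∈ Finset.range (a+1), q ^ ((j:ℤ)*((b:ℤ)-k+j)) * B a j * B b (k-j) := by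
      rw [Finset.sum_range_succ]
      rw [B_of_not a ((a+1:ℕ):ℤ) (by push_cast; omega)]
      simp only [mul_zero, zero_mul, add_zero]
    rw [show ((a+1:ℕ):ℤ) + (b:ℤ) = ((a+b:ℕ):ℤ) + 1 by push_cast; ring] at *
    rw [pascal2 (a+b) k, expand, first, second]
    rw [show ((a+b:ℕ):ℤ) = (a:ℤ) + b by push_cast; ring, ih (k-1), ih k]

theorem main (r s m t : ℕ) (hmr : r ≤ m) (htm : m ≤ t) :
    ∑ j ∈ Finset.range (min r s + 1),
      (RatFunc.X : RatFunc ℚ) ^ (((j : ℤ) - s) * ((j : ℤ) - r)) *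
        B (r : ℤ) (j : ℤ) * B ((m : ℤ) - r) ((s : ℤ) - j) * B ((t : ℤ) + j) (m : ℤ)
    = B (t : ℤ) ((m : ℤ) - s) * B ((t : ℤ) - m + s + r) (s : ℤ) := by
  -- extend the sum to range (r+1)
  have ext : ∑ j ∈ Finset.range (min r s + 1),
        q ^ (((j : ℤ) - s) * ((j : ℤ) - r)) *
          B (r : ℤ) (j : ℤ) * B ((m : ℤ) - r) ((s : ℤ) - j) * B ((t : ℤ) + j) (m : ℤ)
      = ∑ j ∈ Finset.range (r + 1),
        q ^ (((j : ℤ) - s) * ((j : ℤ) - r)) *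
          B (r : ℤ) (j : ℤ) * B ((m : ℤ) - r) ((s : ℤ) - j) * B ((t : ℤ) + j) (m : ℤ) := by
    refine Finset.sum_subset (Finset.range_subset_range.2 (by omega)) fun j hj hnj => ?_
    simp only [Finset.mem_range] at hj hnj
    rw [B_of_not ((m:ℤ)-r) ((s:ℤ)-j) (by omega)]
    ring
  rw [ext]
  -- expand the last binomial by Vandermonde
  have inner : ∀ j ∈ Finset.range (r+1),
      q ^ (((j : ℤ) - s) * ((j : ℤ) - r)) *
          B (r : ℤ) (j : ℤ) * B ((m : ℤ) - r) ((s : ℤ) - j) * B ((t : ℤ) + j) (m : ℤ)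
      = ∑ i ∈ Finset.range (r+1),
          q ^ (((j : ℤ) - s) * ((j : ℤ) - r)) * q ^ (((j:ℤ)-i)*((m:ℤ)-i)) *
            (B (r : ℤ) (j : ℤ) * B (j : ℤ) (i : ℤ)) *
            B ((m : ℤ) - r) ((s : ℤ) - j) * B (t:ℤ) ((m:ℤ)-i) := by
    intro j hj
    simp only [Finset.mem_range] at hj
    have hv : B ((t : ℤ) + j) (m : ℤ)
        = ∑ i ∈ Finset.range (r+1), q ^ (((j:ℤ)-i)*((m:ℤ)-i)) * B (j:ℤ) (i:ℤ) * B (t:ℤ) ((m:ℤ)-i) := by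
      rw [show (t:ℤ)+j = (j:ℤ)+t by ring, vandermonde1 j t m]
      refine Finset.sum_subset (Finset.range_subset_range.2 (by omega)) fun i hi hni => ?_
      simp only [Finset.mem_range] at hi hni
      rw [B_of_not (j:ℤ) (i:ℤ) (by omega)]
      ring
    rw [hv, Finset.mul_sum]
    refine Finset.sum_congr rfl fun i hi => ?_
    ring
  rw [Finset.sum_congr rfl inner, Finset.sum_comm]
  -- pointwise: trinomial revision on B r j * B j i
  have step2 : ∀ i ∈ Finset.range (r+1), ∀ j ∈ Finset.range (r+1),
      q ^ (((j : ℤ) - s) * ((j : ℤ) - r)) * q ^ (((j:ℤ)-i)*((m:ℤ)-i)) *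
        (B (r : ℤ) (j : ℤ) * B (j : ℤ) (i : ℤ)) *
        B ((m : ℤ) - r) ((s : ℤ) - j) * B (t:ℤ) ((m:ℤ)-i)
      = (B (r:ℤ) (i:ℤ) * B (t:ℤ) ((m:ℤ)-i)) *
          (q ^ (((j : ℤ) - s) * ((j : ℤ) - r)) * q ^ (((j:ℤ)-i)*((m:ℤ)-i)) *
            B ((r:ℤ)-i) ((j:ℤ)-i) * B ((m:ℤ)-r) ((s:ℤ)-j)) := by
    intro i _ j _
    rw [trinomial (r:ℤ) (j:ℤ) (i:ℤ)]
    ring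
  have step2' : ∀ i ∈ Finset.range (r+1),
      ∑ j ∈ Finset.range (r+1),
        (q ^ (((j : ℤ) - s) * ((j : ℤ) - r)) * q ^ (((j:ℤ)-i)*((m:ℤ)-i)) *
          (B (r : ℤ) (j : ℤ) * B (j : ℤ) (i : ℤ)) *
          B ((m : ℤ) - r) ((s : ℤ) - j) * B (t:ℤ) ((m:ℤ)-i))
      = (B (r:ℤ) (i:ℤ) * B (t:ℤ) ((m:ℤ)-i)) *
          ∑ j ∈ Finset.range (r+1),
            (q ^ (((j : ℤ) - s) * ((j : ℤ) - r)) * q ^ (((j:ℤ)-i)*((m:ℤ)-i)) *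
              B ((r:ℤ)-i) ((j:ℤ)-i) * B ((m:ℤ)-r) ((s:ℤ)-j)) := by
    intro i hi
    rw [Finset.mul_sum]
    exact Finset.sum_congr rfl fun j hj => step2 i hi j hj
  rw [Finset.sum_congr rfl step2']
  -- compute the inner j-sum
  have inner2 : ∀ i ∈ Finset.range (r+1),
      ∑ j ∈ Finset.range (r+1),
        (q ^ (((j : ℤ) - s) * ((j : ℤ) - r)) * q ^ (((j:ℤ)-i)*((m:ℤ)-i)) *
          B ((r:ℤ)-i) ((j:ℤ)-i) * B ((m:ℤ)-r) ((s:ℤ)-j))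
      = q ^ (((s:ℤ)-i)*((r:ℤ)-i)) * B ((m:ℤ)-i) ((s:ℤ)-i) := by
    intro i hi
    simp only [Finset.mem_range] at hi
    -- restrict to j ≥ i
    have h1 : ∑ j ∈ Finset.range (r+1),
        (q ^ (((j : ℤ) - s) * ((j : ℤ) - r)) * q ^ (((j:ℤ)-i)*((m:ℤ)-i)) *
          B ((r:ℤ)-i) ((j:ℤ)-i) * B ((m:ℤ)-r) ((s:ℤ)-j))
        = ∑ j ∈ Finset.Ico i (r+1),
        (q ^ (((j : ℤ) - s) * ((j : ℤ) - r)) * q ^ (((j:ℤ)-i)*((m:ℤ)-i)) *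
          B ((r:ℤ)-i) ((j:ℤ)-i) * B ((m:ℤ)-r) ((s:ℤ)-j)) := by
      refine (Finset.sum_subset (fun x hx => ?_) fun j hj hnj => ?_).symm
      · simp only [Finset.mem_Ico] at hx
        exact Finset.mem_range.2 hx.2
      · simp only [Finset.mem_range] at hj
        simp only [Finset.mem_Ico] at hnj
        rw [B_of_not ((r:ℤ)-i) ((j:ℤ)-i) (by omega)]
        ring
    have hv2 : B ((m:ℤ)-i) ((s:ℤ)-i)
        = ∑ l ∈ Finset.range ((r-i)+1),
            q ^ ((l:ℤ)*(((m-r:ℕ):ℤ)-((s:ℤ)-i)+l)) * B ((r-i:ℕ):ℤ) (l:ℤ) * B ((m-r:ℕ):ℤ) (((s:ℤ)-i)-l) := by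
      rw [show (m:ℤ)-(i:ℤ) = ((r-i:ℕ):ℤ) + ((m-r:ℕ):ℤ) by push_cast; omega]
      exact vandermonde2 (r-i) (m-r) ((s:ℤ)-i)
    rw [h1, Finset.sum_Ico_eq_sum_range]
    rw [show r + 1 - i = (r - i) + 1 by omega]
    rw [hv2, Finset.mul_sum]
    refine Finset.sum_congr rfl fun l hl => ?_
    simp only [Finset.mem_range] at hl
    have c1 : ((r-i:ℕ):ℤ) = (r:ℤ) - i := by push_cast; omega
    have c2 : ((m-r:ℕ):ℤ) = (m:ℤ) - r := by push_cast; omega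
    have c3 : ((i+l:ℕ):ℤ) = (i:ℤ) + l := by push_cast; ring
    rw [c1, c2, c3]
    have hq : q ^ (((i:ℤ)+l-s)*((i:ℤ)+l-r)) * q ^ ((((i:ℤ)+l)-i)*((m:ℤ)-i))
        = q ^ (((s:ℤ)-i)*((r:ℤ)-i)) * q ^ ((l:ℤ)*(((m:ℤ)-r)-((s:ℤ)-i)+l)) := by
      rw [← zpow_add₀ q_ne, ← zpow_add₀ q_ne]
      congr 1
      ring
    calc q ^ (((i:ℤ)+l-s)*((i:ℤ)+l-r)) * q ^ ((((i:ℤ)+l)-i)*((m:ℤ)-i)) *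
            B ((r:ℤ)-i) (((i:ℤ)+l)-i) * B ((m:ℤ)-r) ((s:ℤ)-((i:ℤ)+l))
        = (q ^ (((i:ℤ)+l-s)*((i:ℤ)+l-r)) * q ^ ((((i:ℤ)+l)-i)*((m:ℤ)-i))) *
            B ((r:ℤ)-i) (l:ℤ) * B ((m:ℤ)-r) (((s:ℤ)-i)-l) := by
          rw [show ((i:ℤ)+l)-i = (l:ℤ) by ring, show (s:ℤ)-((i:ℤ)+l) = ((s:ℤ)-i)-l by ring]
      _ = q ^ (((s:ℤ)-i)*((r:ℤ)-i)) *
            (q ^ ((l:ℤ)*(((m:ℤ)-r)-((s:ℤ)-i)+l)) * B ((r:ℤ)-i) (l:ℤ) * B ((m:ℤ)-r) (((s:ℤ)-i)-l)) := by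
          rw [hq]; ring
  have inner2' : ∀ i ∈ Finset.range (r+1),
      (B (r:ℤ) (i:ℤ) * B (t:ℤ) ((m:ℤ)-i)) *
          ∑ j ∈ Finset.range (r+1),
            (q ^ (((j : ℤ) - s) * ((j : ℤ) - r)) * q ^ (((j:ℤ)-i)*((m:ℤ)-i)) *
              B ((r:ℤ)-i) ((j:ℤ)-i) * B ((m:ℤ)-r) ((s:ℤ)-j))
      = B (t:ℤ) ((m:ℤ)-s) *
          (q ^ (((r:ℤ)-i)*((s:ℤ)-i)) * B (r:ℤ) (i:ℤ) * B ((t-m+s:ℕ):ℤ) ((s:ℤ)-i)) := by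
    intro i hi
    rw [inner2 i hi]
    simp only [Finset.mem_range] at hi
    have hsym : B ((m:ℤ)-i) ((s:ℤ)-i) = B ((m:ℤ)-i) ((m:ℤ)-s) := by
      rw [show (m:ℤ)-(i:ℤ) = ((m-i:ℕ):ℤ) by push_cast; omega, B_symm (m-i) ((s:ℤ)-i)]
      congr 1
      push_cast
      omega
    have htr : B (t:ℤ) ((m:ℤ)-i) * B ((m:ℤ)-i) ((m:ℤ)-s)
        = B (t:ℤ) ((m:ℤ)-s) * B ((t-m+s:ℕ):ℤ) ((s:ℤ)-i) := by
      rw [trinomial (t:ℤ) ((m:ℤ)-i) ((m:ℤ)-s)]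
      rw [show (t:ℤ) - ((m:ℤ)-s) = ((t-m+s:ℕ):ℤ) by push_cast; omega,
        show (m:ℤ)-i - ((m:ℤ)-s) = (s:ℤ)-i by ring]
    calc B (r:ℤ) (i:ℤ) * B (t:ℤ) ((m:ℤ)-i) * (q ^ (((s:ℤ)-i)*((r:ℤ)-i)) * B ((m:ℤ)-i) ((s:ℤ)-i))
        = q ^ (((s:ℤ)-i)*((r:ℤ)-i)) * B (r:ℤ) (i:ℤ) *
            (B (t:ℤ) ((m:ℤ)-i) * B ((m:ℤ)-i) ((m:ℤ)-s)) := by rw [hsym]; ring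
      _ = B (t:ℤ) ((m:ℤ)-s) *
          (q ^ (((r:ℤ)-i)*((s:ℤ)-i)) * B (r:ℤ) (i:ℤ) * B ((t-m+s:ℕ):ℤ) ((s:ℤ)-i)) := by
          rw [htr, show ((s:ℤ)-i)*((r:ℤ)-i) = ((r:ℤ)-i)*((s:ℤ)-i) by ring]
          ring
  rw [Finset.sum_congr rfl inner2', ← Finset.mul_sum]
  congr 1
  rw [← vandermonde1 r (t-m+s) (s:ℤ)]
  congr 1
  push_cast
  omega
end QT

theorem q_takacs (r s m t : ℕ) (hmr : r ≤ m) (htm : m ≤ t) :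
    ∑ j ∈ Finset.range (min r s + 1),
      (RatFunc.X : RatFunc ℚ) ^ (((j : ℤ) - s) * ((j : ℤ) - r)) *
        qBinom RatFunc.X (r : ℤ) (j : ℤ) *
        qBinom RatFunc.X ((m : ℤ) - r) ((s : ℤ) - j) *
        qBinom RatFunc.X ((t : ℤ) + j) (m : ℤ)
    = qBinom RatFunc.X (t : ℤ) ((m : ℤ) - s) *
        qBinom RatFunc.X ((t : ℤ) - m + s + r) (s : ℤ) :=
  QT.main r s m t hmr htm
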